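/- (Proposition: RS dynamics coincides with the PW(r) multiplicative weights update) Let W be any fitness matrix, P any population distribution, and r ∈ [0,1]. Then the RS update P' = RS_r(P) satisfies, for every i ∈ [n], Σ_j p'_{ij} = (r · x_i(P) · Σ_j w_{ij} y_j(P) + (1−r) · Σ_j w_{ij} p_{ij}) / w̄^R(P). In particular, for every i with x_i(P) > 0, x_i(RS_r(P)) = x_i(P) · (r·G_i(P) + (1−r)·g_i(P)) / w̄^R(P). -/

import Mathlib

open Finset

noncomputable section

/-- `P` is a population distribution: nonnegative entries summing to 1. -/
def IsPopDist {n m : ℕ} (P : Fin n → Fin m → ℝ) : Prop :=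
  (∀ i j, 0 ≤ P i j) ∧ (∑ i, ∑ j, P i j) = 1

/-- `W` is a fitness matrix: strictly positive entries. -/
def IsFitness {n m : ℕ} (W : Fin n → Fin m → ℝ) : Prop :=
  ∀ i j, 0 < W i j

/-- Average fitness w̄(P) = Σ_{i,j} p_{ij} w_{ij}. -/
def wbar {n m : ℕ} (W P : Fin n → Fin m → ℝ) : ℝ :=
  ∑ i, ∑ j, P i j * W i j

/-- First marginal x_i(P) = Σ_j p_{ij}. -/
def xmarg {n m : ℕ} (P : Fin n → Fin m → ℝ) (i : Fin n) : ℝ :=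
  ∑ j, P i j

/-- Second marginal y_j(P) = Σ_i p_{ij}. -/
def ymarg {n m : ℕ} (P : Fin n → Fin m → ℝ) (j : Fin m) : ℝ :=
  ∑ i, P i j

/-- Selection update p^S_{ij} = p_{ij} w_{ij} / w̄(P). -/
def pS {n m : ℕ} (W P : Fin n → Fin m → ℝ) (i : Fin n) (j : Fin m) : ℝ :=
  P i j * W i j / wbar W P

/-- Recombination-after-selection matrix
  p^{SR}_{ij} = (Σ_l p_{il} w_{il})(Σ_k p_{kj} w_{kj}) / w̄(P)². -/
def pSR {n m : ℕ} (W P : Fin n → Fin m → ℝ) (i : Fin n) (j : Fin m) : ℝ :=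
  (∑ l, P i l * W i l) * (∑ k, P k j * W k j) / (wbar W P) ^ 2

/-- SR update: r·p^{SR}_{ij} + (1−r)·p^S_{ij}. -/
def SRupd {n m : ℕ} (W P : Fin n → Fin m → ℝ) (r : ℝ) (i : Fin n) (j : Fin m) : ℝ :=
  r * pSR W P i j + (1 - r) * pS W P i j

/-- Conditional expected fitness g_i(P) = Σ_j (p_{ij}/x_i(P)) w_{ij}. -/
def gcond {n m : ℕ} (W P : Fin n → Fin m → ℝ) (i : Fin n) : ℝ :=
  ∑ j, (P i j / xmarg P i) * W i j

/-- Marginal expected fitness G_i(P) = Σ_j y_j(P) w_{ij}. -/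
def Gmarg {n m : ℕ} (W P : Fin n → Fin m → ℝ) (i : Fin n) : ℝ :=
  ∑ j, ymarg P j * W i j

/-- Normalizer w̄^R(P) = Σ_{i,j} w_{ij}(r·x_i y_j + (1−r)·p_{ij}). -/
def wbarR {n m : ℕ} (W P : Fin n → Fin m → ℝ) (r : ℝ) : ℝ :=
  ∑ i, ∑ j, W i j * (r * xmarg P i * ymarg P j + (1 - r) * P i j)

/-- RS update: w_{ij}(r·x_i y_j + (1−r)·p_{ij}) / w̄^R(P). -/
def RSupd {n m : ℕ} (W P : Fin n → Fin m → ℝ) (r : ℝ) (i : Fin n) (j : Fin m) : ℝ :=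
  W i j * (r * xmarg P i * ymarg P j + (1 - r) * P i j) / wbarR W P r

/-- Proposition: RS dynamics coincides with the PW(r) multiplicative weights update. -/
theorem rs_dynamics_is_pw_r (n m : ℕ) (hn : 1 ≤ n) (hm : 1 ≤ m)
    (W P : Fin n → Fin m → ℝ) (hW : IsFitness W) (hP : IsPopDist P)
    (r : ℝ) (hr : r ∈ Set.Icc (0 : ℝ) 1) :
    (∀ i, ∑ j, RSupd W P r i j =
      (r * xmarg P i * (∑ j, W i j * ymarg P j) + (1 - r) * ∑ j, W i j * P i j)
        / wbarR W P r) ∧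
    (∀ i, 0 < xmarg P i →
      ∑ j, RSupd W P r i j =
        xmarg P i * (r * Gmarg W P i + (1 - r) * gcond W P i) / wbarR W P r) := by
  have h1 : ∀ i, ∑ j, RSupd W P r i j =
      (r * xmarg P i * (∑ j, W i j * ymarg P j) + (1 - r) * ∑ j, W i j * P i j)
        / wbarR W P r := by
    intro i
    unfold RSupd
    rw [← Finset.sum_div]
    congr 1
    rw [Finset.mul_sum, Finset.mul_sum, ← Finset.sum_add_distrib]
    apply Finset.sum_congr rfl
    intro j _
    ring
  refine ⟨h1, fun i hx => ?_⟩
  rw [h1 i]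
  congr 1
  unfold Gmarg gcond
  rw [Finset.mul_sum, Finset.mul_sum, Finset.mul_sum, mul_add, Finset.mul_sum,
    Finset.mul_sum]
  congr 1
  · apply Finset.sum_congr rfl; intro j _; ring
  · rw [Finset.mul_sum]
    apply Finset.sum_congr rfl; intro j _
    field_simp [hx.ne']
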